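/- Let A and B be residually finite groups and let H be a subgroup of A that is separable in A. Then the image of H under the canonical inclusion A → A ∗ B into the free product A ∗ B is separable in A ∗ B. -/

import Mathlib

open Monoid List

set_option linter.unusedSectionVars false

/-- A subgroup `H` of a group `G` is separable in `G` if for every `g ∈ G` with `g ∉ H`
there exists a finite-index subgroup `K` of `G` with `H ≤ K` and `g ∉ K`. -/
def SubgroupSeparable {G : Type*} [Group G] (H : Subgroup G) : Prop :=
  ∀ g : G, g ∉ H → ∃ K : Subgroup G, K.FiniteIndex ∧ H ≤ K ∧ g ∉ K

/-- A group `G` is residually finite if every nontrivial element survives in some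
finite quotient. -/
def ResiduallyFinite (G : Type*) [Group G] : Prop :=
  ∀ g : G, g ≠ 1 → ∃ (F : Type) (_ : Group F) (_ : Finite F) (φ : G →* F), φ g ≠ 1

namespace FPSep

open scoped Classical

variable {P Q : Type*} [Group P] [Group Q]

/-- A letter is good if it is a non-identity element of its factor. -/
def Good (x : P ⊕ Q) : Prop := x ≠ Sum.inl 1 ∧ x ≠ Sum.inr 1

/-- Reduced words: alternating letters, all nontrivial. -/
def Red (l : List (P ⊕ Q)) : Prop :=
  l.Chain' (fun x y => x.isLeft ≠ y.isLeft) ∧ ∀ x ∈ l, Good x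

lemma red_nil : Red ([] : List (P ⊕ Q)) := ⟨List.isChain_nil, by simp⟩

lemma Red.tail' {x : P ⊕ Q} {t : List (P ⊕ Q)} (h : Red (x :: t)) : Red t :=
  ⟨h.1.tail, fun y hy => h.2 y (List.mem_cons_of_mem _ hy)⟩

/-- The action of `p : P` on reduced words of length at most `n`. -/
noncomputable def actL (n : ℕ) (p : P) : List (P ⊕ Q) → List (P ⊕ Q)
  | Sum.inl p' :: t => if p * p' = 1 then t else Sum.inl (p * p') :: t
  | l => if l.length < n ∧ p ≠ 1 then Sum.inl p :: l else l

lemma actL_cons_inl (n : ℕ) (p p' : P) (t : List (P ⊕ Q)) :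
    actL n p (Sum.inl p' :: t) = if p * p' = 1 then t else Sum.inl (p * p') :: t := rfl

lemma actL_nil (n : ℕ) (p : P) :
    actL n p ([] : List (P ⊕ Q)) = if 0 < n ∧ p ≠ 1 then [Sum.inl p] else [] := rfl

lemma actL_cons_inr (n : ℕ) (p : P) (q : Q) (t : List (P ⊕ Q)) :
    actL n p (Sum.inr q :: t) =
      if (Sum.inr q :: t).length < n ∧ p ≠ 1 then Sum.inl p :: Sum.inr q :: t
      else Sum.inr q :: t := rfl

lemma red_actL {n : ℕ} {p : P} {l : List (P ⊕ Q)} (hl : Red l) (hn : l.length ≤ n) :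
    Red (actL n p l) ∧ (actL n p l).length ≤ n := by
  rcases l with _ | ⟨x | b, t⟩
  · rw [actL_nil]
    split_ifs with h
    · refine ⟨⟨List.isChain_singleton _, ?_⟩, h.1⟩
      intro y hy
      rw [List.mem_singleton] at hy
      subst hy
      exact ⟨by simpa using h.2, by simp⟩
    · exact ⟨red_nil, hn⟩
  · rw [actL_cons_inl]
    split_ifs with h
    · exact ⟨hl.tail', le_trans (by simp) hn⟩
    · refine ⟨⟨?_, ?_⟩, by simpa using hn⟩
      · rcases t with _ | ⟨y, t'⟩
        · exact List.isChain_singleton _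
        · exact List.isChain_cons_cons.2 ⟨by simpa using (List.isChain_cons_cons.1 hl.1).1,
            (List.isChain_cons_cons.1 hl.1).2⟩
      · intro y hy
        rcases List.mem_cons.1 hy with rfl | hy
        · exact ⟨by simpa using h, by simp⟩
        · exact hl.2 y (List.mem_cons_of_mem _ hy)
  · rw [actL_cons_inr]
    split_ifs with h
    · refine ⟨⟨List.isChain_cons_cons.2 ⟨by simp, hl.1⟩, ?_⟩, h.1⟩
      intro y hy
      rcases List.mem_cons.1 hy with rfl | hy
      · exact ⟨by simpa using h.2, by simp⟩
      · exact hl.2 y hy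
    · exact ⟨hl, hn⟩

lemma actL_one {n : ℕ} {l : List (P ⊕ Q)} (hl : Red l) : actL n (1 : P) l = l := by
  rcases l with _ | ⟨x | b, t⟩
  · simp [actL_nil]
  · have hx : ¬((1 : P) * x = 1) := by
      have := (hl.2 _ (List.mem_cons_self)).1
      simpa using this
    rw [actL_cons_inl, if_neg hx, one_mul]
  · simp [actL_cons_inr]

lemma actL_actL {n : ℕ} (p q : P) {l : List (P ⊕ Q)} (hl : Red l) (hn : l.length ≤ n) :
    actL n p (actL n q l) = actL n (p * q) l := by
  rcases l with _ | ⟨x | b, t⟩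
  · by_cases h1 : 0 < n ∧ q ≠ 1
    · rw [actL_nil, if_pos h1, actL_cons_inl, actL_nil]
      by_cases hpq : p * q = 1
      · rw [if_pos hpq, if_neg (by simp [hpq])]
      · rw [if_neg hpq, if_pos ⟨h1.1, hpq⟩]
    · rcases not_and_or.1 h1 with h | h
      · rw [actL_nil, if_neg (fun hc => h hc.1), actL_nil, if_neg (fun hc => h hc.1),
          actL_nil, if_neg (fun hc => h hc.1)]
      · have hq : q = 1 := not_not.1 h
        subst hq
        rw [actL_one red_nil, mul_one]
  · -- l = Sum.inl x :: t
    have htshape : t = [] ∨ ∃ b t', t = Sum.inr b :: t' := by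
      rcases t with _ | ⟨y | b, t'⟩
      · exact Or.inl rfl
      · exact absurd (List.isChain_cons_cons.1 hl.1).1 (by simp)
      · exact Or.inr ⟨b, t', rfl⟩
    rw [actL_cons_inl]
    by_cases h : q * x = 1
    · rw [if_pos h]
      have htn : t.length < n := lt_of_lt_of_le (by simp) hn
      have hx : x = q⁻¹ := eq_inv_of_mul_eq_one_right h
      subst hx
      have hpq : p * q * q⁻¹ = p := by group
      rw [actL_cons_inl, hpq]
      rcases htshape with rfl | ⟨b, t', rfl⟩ <;> by_cases hp : p = 1
      · rw [actL_nil, if_neg (by simp [hp]), if_pos hp]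
      · rw [actL_nil, if_pos ⟨htn, hp⟩, if_neg hp]
      · rw [actL_cons_inr, if_neg (by simp [hp]), if_pos hp]
      · rw [actL_cons_inr, if_pos ⟨htn, hp⟩, if_neg hp]
    · rw [if_neg h, actL_cons_inl, actL_cons_inl, mul_assoc]
  · -- l = Sum.inr b :: t
    rw [actL_cons_inr]
    by_cases h1 : (Sum.inr b :: t).length < n ∧ q ≠ 1
    · rw [if_pos h1, actL_cons_inl, actL_cons_inr]
      by_cases hpq : p * q = 1
      · rw [if_pos hpq, if_neg (by simp [hpq])]
      · rw [if_neg hpq, if_pos ⟨h1.1, hpq⟩]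
    · rcases not_and_or.1 h1 with h | h
      · rw [if_neg (fun hc => h hc.1), actL_cons_inr, if_neg (fun hc => h hc.1),
          actL_cons_inr, if_neg (fun hc => h hc.1)]
      · have hq : q = 1 := not_not.1 h
        subst hq
        rw [if_neg (by simp), mul_one, actL_cons_inr]

end FPSep

namespace FPSep

open scoped Classical

variable {P Q : Type*} [Group P] [Group Q]

/-- The action of `q : Q` on reduced words of length at most `n`. -/
noncomputable def actR (n : ℕ) (q : Q) : List (P ⊕ Q) → List (P ⊕ Q)
  | Sum.inr q' :: t => if q * q' = 1 then t else Sum.inr (q * q') :: t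
  | l => if l.length < n ∧ q ≠ 1 then Sum.inr q :: l else l

lemma actR_cons_inr (n : ℕ) (q q' : Q) (t : List (P ⊕ Q)) :
    actR n q (Sum.inr q' :: t) = if q * q' = 1 then t else Sum.inr (q * q') :: t := rfl

lemma actR_nil (n : ℕ) (q : Q) :
    actR n q ([] : List (P ⊕ Q)) = if 0 < n ∧ q ≠ 1 then [Sum.inr q] else [] := rfl

lemma actR_cons_inl (n : ℕ) (q : Q) (p : P) (t : List (P ⊕ Q)) :
    actR n q (Sum.inl p :: t) =
      if (Sum.inl p :: t).length < n ∧ q ≠ 1 then Sum.inr q :: Sum.inl p :: t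
      else Sum.inl p :: t := rfl

lemma red_actR {n : ℕ} {q : Q} {l : List (P ⊕ Q)} (hl : Red l) (hn : l.length ≤ n) :
    Red (actR n q l) ∧ (actR n q l).length ≤ n := by
  rcases l with _ | ⟨p | x, t⟩
  · rw [actR_nil]
    split_ifs with h
    · refine ⟨⟨List.isChain_singleton _, ?_⟩, h.1⟩
      intro y hy
      rw [List.mem_singleton] at hy
      subst hy
      exact ⟨by simp, by simpa using h.2⟩
    · exact ⟨red_nil, hn⟩
  · rw [actR_cons_inl]
    split_ifs with h
    · refine ⟨⟨List.isChain_cons_cons.2 ⟨by simp, hl.1⟩, ?_⟩, h.1⟩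
      intro y hy
      rcases List.mem_cons.1 hy with rfl | hy
      · exact ⟨by simp, by simpa using h.2⟩
      · exact hl.2 y hy
    · exact ⟨hl, hn⟩
  · rw [actR_cons_inr]
    split_ifs with h
    · exact ⟨hl.tail', le_trans (by simp) hn⟩
    · refine ⟨⟨?_, ?_⟩, by simpa using hn⟩
      · rcases t with _ | ⟨y, t'⟩
        · exact List.isChain_singleton _
        · exact List.isChain_cons_cons.2 ⟨by simpa using (List.isChain_cons_cons.1 hl.1).1,
            (List.isChain_cons_cons.1 hl.1).2⟩
      · intro y hy
        rcases List.mem_cons.1 hy with rfl | hy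
        · exact ⟨by simp, by simpa using h⟩
        · exact hl.2 y (List.mem_cons_of_mem _ hy)

lemma actR_one {n : ℕ} {l : List (P ⊕ Q)} (hl : Red l) : actR n (1 : Q) l = l := by
  rcases l with _ | ⟨p | x, t⟩
  · simp [actR_nil]
  · simp [actR_cons_inl]
  · have hx : ¬((1 : Q) * x = 1) := by
      have := (hl.2 _ (List.mem_cons_self)).2
      simpa using this
    rw [actR_cons_inr, if_neg hx, one_mul]

lemma actR_actR {n : ℕ} (p q : Q) {l : List (P ⊕ Q)} (hl : Red l) (hn : l.length ≤ n) :
    actR n p (actR n q l) = actR n (p * q) l := by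
  rcases l with _ | ⟨b | x, t⟩
  · by_cases h1 : 0 < n ∧ q ≠ 1
    · rw [actR_nil, if_pos h1, actR_cons_inr, actR_nil]
      by_cases hpq : p * q = 1
      · rw [if_pos hpq, if_neg (by simp [hpq])]
      · rw [if_neg hpq, if_pos ⟨h1.1, hpq⟩]
    · rcases not_and_or.1 h1 with h | h
      · rw [actR_nil, if_neg (fun hc => h hc.1), actR_nil, if_neg (fun hc => h hc.1),
          actR_nil, if_neg (fun hc => h hc.1)]
      · have hq : q = 1 := not_not.1 h
        subst hq
        rw [actR_one red_nil, mul_one]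
  · -- l = Sum.inl b :: t
    rw [actR_cons_inl]
    by_cases h1 : (Sum.inl b :: t).length < n ∧ q ≠ 1
    · rw [if_pos h1, actR_cons_inr, actR_cons_inl]
      by_cases hpq : p * q = 1
      · rw [if_pos hpq, if_neg (by simp [hpq])]
      · rw [if_neg hpq, if_pos ⟨h1.1, hpq⟩]
    · rcases not_and_or.1 h1 with h | h
      · rw [if_neg (fun hc => h hc.1), actR_cons_inl, if_neg (fun hc => h hc.1),
          actR_cons_inl, if_neg (fun hc => h hc.1)]
      · have hq : q = 1 := not_not.1 h
        subst hq
        rw [if_neg (by simp), mul_one, actR_cons_inl]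
  · -- l = Sum.inr x :: t
    have htshape : t = [] ∨ ∃ b t', t = Sum.inl b :: t' := by
      rcases t with _ | ⟨b | y, t'⟩
      · exact Or.inl rfl
      · exact Or.inr ⟨b, t', rfl⟩
      · exact absurd (List.isChain_cons_cons.1 hl.1).1 (by simp)
    rw [actR_cons_inr]
    by_cases h : q * x = 1
    · rw [if_pos h]
      have htn : t.length < n := lt_of_lt_of_le (by simp) hn
      have hx : x = q⁻¹ := eq_inv_of_mul_eq_one_right h
      subst hx
      have hpq : p * q * q⁻¹ = p := by group
      rw [actR_cons_inr, hpq]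
      rcases htshape with rfl | ⟨b, t', rfl⟩ <;> by_cases hp : p = 1
      · rw [actR_nil, if_neg (by simp [hp]), if_pos hp]
      · rw [actR_nil, if_pos ⟨htn, hp⟩, if_neg hp]
      · rw [actR_cons_inl, if_neg (by simp [hp]), if_pos hp]
      · rw [actR_cons_inl, if_pos ⟨htn, hp⟩, if_neg hp]
    · rw [if_neg h, actR_cons_inr, actR_cons_inr, mul_assoc]

end FPSep

namespace FPSep

open scoped Classical

variable (P Q : Type*) [Group P] [Group Q]

/-- Reduced words of length at most `n`. -/
def X (n : ℕ) : Type _ := {l : List (P ⊕ Q) // Red l ∧ l.length ≤ n}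

instance (n : ℕ) [Finite P] [Finite Q] : Finite (X P Q n) := by
  haveI := (List.finite_length_le (P ⊕ Q) n).to_subtype
  exact Finite.of_injective
    (fun x : X P Q n => (⟨x.1, x.2.2⟩ : {l : List (P ⊕ Q) | l.length ≤ n}))
    (fun a b hab => Subtype.ext (by simpa using congrArg Subtype.val hab))

variable {P Q}

noncomputable def permL (n : ℕ) (p : P) : Equiv.Perm (X P Q n) where
  toFun x := ⟨actL n p x.1, red_actL x.2.1 x.2.2⟩
  invFun x := ⟨actL n p⁻¹ x.1, red_actL x.2.1 x.2.2⟩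
  left_inv x := Subtype.ext (by
    simp only
    rw [actL_actL _ _ x.2.1 x.2.2, inv_mul_cancel, actL_one x.2.1])
  right_inv x := Subtype.ext (by
    simp only
    rw [actL_actL _ _ x.2.1 x.2.2, mul_inv_cancel, actL_one x.2.1])

noncomputable def homL (n : ℕ) : P →* Equiv.Perm (X P Q n) where
  toFun := permL n
  map_one' := Equiv.ext fun x => Subtype.ext (actL_one x.2.1)
  map_mul' p q := Equiv.ext fun x => Subtype.ext (actL_actL p q x.2.1 x.2.2).symm

noncomputable def permR (n : ℕ) (q : Q) : Equiv.Perm (X P Q n) where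
  toFun x := ⟨actR n q x.1, red_actR x.2.1 x.2.2⟩
  invFun x := ⟨actR n q⁻¹ x.1, red_actR x.2.1 x.2.2⟩
  left_inv x := Subtype.ext (by
    simp only
    rw [actR_actR _ _ x.2.1 x.2.2, inv_mul_cancel, actR_one x.2.1])
  right_inv x := Subtype.ext (by
    simp only
    rw [actR_actR _ _ x.2.1 x.2.2, mul_inv_cancel, actR_one x.2.1])

noncomputable def homR (n : ℕ) : Q →* Equiv.Perm (X P Q n) where
  toFun := permR n
  map_one' := Equiv.ext fun x => Subtype.ext (actR_one x.2.1)
  map_mul' p q := Equiv.ext fun x => Subtype.ext (actR_actR p q x.2.1 x.2.2).symm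

@[simp] lemma homL_apply (n : ℕ) (p : P) (x : X P Q n) :
    (homL n p x).1 = actL n p x.1 := rfl

@[simp] lemma homR_apply (n : ℕ) (q : Q) (x : X P Q n) :
    (homR n q x).1 = actR n q x.1 := rfl

end FPSep

namespace FPSep

open scoped Classical

variable {A B : Type*} [Group A] [Group B] {P Q : Type*} [Group P] [Group Q]

/-- The homomorphism from the coproduct to permutations of bounded reduced words. -/
noncomputable def bigHom (φ : A →* P) (ψ : B →* Q) (n : ℕ) :
    Coprod A B →* Equiv.Perm (X P Q n) :=
  Coprod.lift ((homL n).comp φ) ((homR n).comp ψ)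

lemma compute (φ : A →* P) (ψ : B →* Q) (n : ℕ) (w : List (A ⊕ B))
    (hch : w.Chain' (fun x y => x.isLeft ≠ y.isLeft))
    (hg : ∀ x ∈ w.map (Sum.map φ ψ), Good x)
    (hlen : w.length ≤ n) :
    ((bigHom φ ψ n) ((w.map (Sum.elim Coprod.inl Coprod.inr)).prod)
      ⟨[], red_nil, by simp⟩).1 = w.map (Sum.map φ ψ) := by
  induction w with
  | nil => simp [bigHom]; rfl
  | cons x t ih =>
    have hcht := hch.tail
    have hgt : ∀ y ∈ t.map (Sum.map φ ψ), Good y := fun y hy =>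
      hg y (by rw [List.map_cons]; exact List.mem_cons_of_mem _ hy)
    have hlent : t.length ≤ n := le_trans (by simp) hlen
    have ihv := ih hcht hgt hlent
    rw [List.map_cons, List.prod_cons, map_mul]
    erw [Equiv.Perm.mul_apply]
    rcases x with a | b
    · have hgood : Good (Sum.inl (φ a) : P ⊕ Q) := hg _ (by simp)
      have hφa : φ a ≠ 1 := fun h => hgood.1 (by rw [h])
      have e1 : (bigHom φ ψ n) (Sum.elim Coprod.inl Coprod.inr (Sum.inl a))
          = homL n (φ a) := by simp [bigHom]
      erw [e1, homL_apply, ihv]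
      rcases t with _ | ⟨z, t'⟩
      · have h0 : 0 < n := lt_of_lt_of_le (by simp) hlen
        rw [List.map_nil, actL_nil, if_pos ⟨h0, hφa⟩]
        simp
      · rcases z with a' | b'
        · exact absurd (List.isChain_cons_cons.1 hch).1 (by simp)
        · have hlt : (Sum.inr (ψ b') :: t'.map (Sum.map φ ψ)).length < n := by
            simp only [List.length_cons, List.length_map] at hlen ⊢
            omega
          simp only [List.map_cons, Sum.map_inl, Sum.map_inr]
          rw [actL_cons_inr, if_pos ⟨hlt, hφa⟩]
    · have hgood : Good (Sum.inr (ψ b) : P ⊕ Q) := hg _ (by simp)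
      have hψb : ψ b ≠ 1 := fun h => hgood.2 (by rw [h])
      have e1 : (bigHom φ ψ n) (Sum.elim Coprod.inl Coprod.inr (Sum.inr b))
          = homR n (ψ b) := by simp [bigHom]
      erw [e1, homR_apply, ihv]
      rcases t with _ | ⟨z, t'⟩
      · have h0 : 0 < n := lt_of_lt_of_le (by simp) hlen
        rw [List.map_nil, actR_nil, if_pos ⟨h0, hψb⟩]
        simp
      · rcases z with a' | b'
        · have hlt : (Sum.inl (φ a') :: t'.map (Sum.map φ ψ)).length < n := by
            simp only [List.length_cons, List.length_map] at hlen ⊢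
            omega
          simp only [List.map_cons, Sum.map_inl, Sum.map_inr]
          rw [actR_cons_inl, if_pos ⟨hlt, hψb⟩]
        · exact absurd (List.isChain_cons_cons.1 hch).1 (by simp)

lemma consL_red (a : A) {w : List (A ⊕ B)} (hw : Red w) :
    ∃ w', Red w' ∧ (w'.map (Sum.elim Coprod.inl Coprod.inr)).prod
      = Coprod.inl a * (w.map (Sum.elim Coprod.inl Coprod.inr)).prod := by
  by_cases ha : a = 1
  · exact ⟨w, hw, by simp [ha]⟩
  rcases w with _ | ⟨x | b, t⟩
  · refine ⟨[Sum.inl a], ⟨List.isChain_singleton _, ?_⟩, by simp⟩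
    intro y hy; rw [List.mem_singleton] at hy; subst hy
    exact ⟨by simpa using ha, by simp⟩
  · by_cases h : a * x = 1
    · refine ⟨t, hw.tail', ?_⟩
      rw [List.map_cons, List.prod_cons, ← mul_assoc]
      simp only [Sum.elim_inl]
      rw [← map_mul, h, map_one, one_mul]
    · refine ⟨Sum.inl (a * x) :: t, ⟨?_, ?_⟩, ?_⟩
      · rcases t with _ | ⟨y, t'⟩
        · exact List.isChain_singleton _
        · exact List.isChain_cons_cons.2 ⟨by simpa using (List.isChain_cons_cons.1 hw.1).1,
            (List.isChain_cons_cons.1 hw.1).2⟩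
      · intro y hy
        rcases List.mem_cons.1 hy with rfl | hy
        · exact ⟨by simpa using h, by simp⟩
        · exact hw.2 y (List.mem_cons_of_mem _ hy)
      · rw [List.map_cons, List.map_cons, List.prod_cons, List.prod_cons, ← mul_assoc]
        simp only [Sum.elim_inl]
        rw [← map_mul]
  · refine ⟨Sum.inl a :: Sum.inr b :: t, ⟨List.isChain_cons_cons.2 ⟨by simp, hw.1⟩, ?_⟩, ?_⟩
    · intro y hy
      rcases List.mem_cons.1 hy with rfl | hy
      · exact ⟨by simpa using ha, by simp⟩
      · exact hw.2 y hy
    · rw [List.map_cons, List.prod_cons]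
      simp only [Sum.elim_inl]

lemma consR_red (b : B) {w : List (A ⊕ B)} (hw : Red w) :
    ∃ w', Red w' ∧ (w'.map (Sum.elim Coprod.inl Coprod.inr)).prod
      = Coprod.inr b * (w.map (Sum.elim Coprod.inl Coprod.inr)).prod := by
  by_cases hb : b = 1
  · exact ⟨w, hw, by simp [hb]⟩
  rcases w with _ | ⟨a, t⟩
  · refine ⟨[Sum.inr b], ⟨List.isChain_singleton _, ?_⟩, by simp⟩
    intro y hy; rw [List.mem_singleton] at hy; subst hy
    exact ⟨by simp, by simpa using hb⟩
  rcases a with a | x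
  · refine ⟨Sum.inr b :: Sum.inl a :: t, ⟨List.isChain_cons_cons.2 ⟨by simp, hw.1⟩, ?_⟩, ?_⟩
    · intro y hy
      rcases List.mem_cons.1 hy with rfl | hy
      · exact ⟨by simp, by simpa using hb⟩
      · exact hw.2 y hy
    · rw [List.map_cons, List.prod_cons]
      simp only [Sum.elim_inr]
  · by_cases h : b * x = 1
    · refine ⟨t, hw.tail', ?_⟩
      rw [List.map_cons, List.prod_cons, ← mul_assoc]
      simp only [Sum.elim_inr]
      rw [← map_mul, h, map_one, one_mul]
    · refine ⟨Sum.inr (b * x) :: t, ⟨?_, ?_⟩, ?_⟩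
      · rcases t with _ | ⟨y, t'⟩
        · exact List.isChain_singleton _
        · exact List.isChain_cons_cons.2 ⟨by simpa using (List.isChain_cons_cons.1 hw.1).1,
            (List.isChain_cons_cons.1 hw.1).2⟩
      · intro y hy
        rcases List.mem_cons.1 hy with rfl | hy
        · exact ⟨by simp, by simpa using h⟩
        · exact hw.2 y (List.mem_cons_of_mem _ hy)
      · rw [List.map_cons, List.map_cons, List.prod_cons, List.prod_cons, ← mul_assoc]
        simp only [Sum.elim_inr]
        rw [← map_mul]

lemma exists_red (g : Coprod A B) :
    ∃ w : List (A ⊕ B), Red w ∧ (w.map (Sum.elim Coprod.inl Coprod.inr)).prod = g := by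
  induction g using Coprod.induction_on' with
  | one => exact ⟨[], red_nil, by simp⟩
  | inl_mul m x hx =>
    obtain ⟨w, hw, rfl⟩ := hx
    exact consL_red m hw
  | inr_mul m x hx =>
    obtain ⟨w, hw, rfl⟩ := hx
    exact consR_red m hw

lemma prod_inl_of_no_inr {w : List (A ⊕ B)} (hw : Red w) (h : ∀ b : B, Sum.inr b ∉ w) :
    ∃ a : A, (w.map (Sum.elim Coprod.inl Coprod.inr)).prod = Coprod.inl a := by
  rcases w with _ | ⟨x | b, t⟩
  · exact ⟨1, by simp⟩
  · rcases t with _ | ⟨y | b', t'⟩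
    · exact ⟨x, by simp⟩
    · exact absurd (List.isChain_cons_cons.1 hw.1).1 (by simp)
    · exact (h b' (List.mem_cons_of_mem _ (List.mem_cons_self))).elim
  · exact (h b (List.mem_cons_self)).elim

lemma exists_quot {G : Type*} [Group G] (hG : ResiduallyFinite G) (l : List G)
    (hl : ∀ a ∈ l, a ≠ 1) :
    ∃ (F : Type) (_ : Group F) (_ : Finite F) (φ : G →* F), ∀ a ∈ l, φ a ≠ 1 := by
  induction l with
  | nil => exact ⟨PUnit, inferInstance, inferInstance, 1, by simp⟩
  | cons a t ih =>
    obtain ⟨F, hF1, hF2, φ, hφ⟩ := ih (fun x hx => hl x (List.mem_cons_of_mem _ hx))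
    obtain ⟨F', hF1', hF2', φ', hφ'⟩ := hG a (hl a (List.mem_cons_self))
    letI := hF1; letI := hF2; letI := hF1'; letI := hF2'
    refine ⟨F × F', inferInstance, inferInstance, MonoidHom.prod φ φ', ?_⟩
    intro x hx
    rcases List.mem_cons.1 hx with rfl | hx
    · exact fun hcon => hφ' (congrArg Prod.snd hcon)
    · exact fun hcon => hφ x hx (congrArg Prod.fst hcon)

end FPSep

open Monoid in
/-- If `A` and `B` are residually finite and `H ≤ A` is separable in `A`, then the
image of `H` in the free product `A ∗ B` is separable in `A ∗ B`. -/
theorem separable_image_in_free_product {A B : Type*} [Group A] [Group B]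
    (hA : ResiduallyFinite A) (hB : ResiduallyFinite B)
    (H : Subgroup A) (hH : SubgroupSeparable H) :
    SubgroupSeparable (H.map (Coprod.inl : A →* Coprod A B)) := by
  classical
  intro g hg
  by_cases hfst : Coprod.fst g ∈ H
  · -- main case: `g` is not in the image of `A` at all
    obtain ⟨w, hw, hprod⟩ := FPSep.exists_red g
    have hinr : ∃ b : B, Sum.inr b ∈ w := by
      by_contra hno
      push_neg at hno
      obtain ⟨a, ha⟩ := FPSep.prod_inl_of_no_inr hw hno
      rw [hprod] at ha
      refine hg (Subgroup.mem_map.2 ⟨a, ?_, ha.symm⟩)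
      have hfa : Coprod.fst g = a := by rw [ha]; simp
      rwa [hfa] at hfst
    obtain ⟨b0, hb0⟩ := hinr
    set n := w.length with hn
    have hla : ∀ a ∈ w.filterMap Sum.getLeft?, a ≠ (1 : A) := by
      intro a ha
      obtain ⟨x, hx, hxa⟩ := List.mem_filterMap.1 ha
      rcases x with a' | b'
      · obtain rfl : a' = a := by simpa using hxa
        exact fun h1 => (hw.2 _ hx).1 (by rw [h1])
      · simp at hxa
    have hlb : ∀ b ∈ w.filterMap Sum.getRight?, b ≠ (1 : B) := by
      intro b hb
      obtain ⟨x, hx, hxb⟩ := List.mem_filterMap.1 hb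
      rcases x with a' | b'
      · simp at hxb
      · obtain rfl : b' = b := by simpa using hxb
        exact fun h1 => (hw.2 _ hx).2 (by rw [h1])
    obtain ⟨P, hP1, hP2, φ, hφ⟩ := FPSep.exists_quot hA _ hla
    obtain ⟨Q, hQ1, hQ2, ψ, hψ⟩ := FPSep.exists_quot hB _ hlb
    letI := hP1; letI := hP2; letI := hQ1; letI := hQ2
    set Φ := FPSep.bigHom φ ψ n with hΦdef
    set S : Subgroup (Equiv.Perm (FPSep.X P Q n)) := (Φ.comp Coprod.inl).range with hSdef
    have hfinPerm : Finite (Equiv.Perm (FPSep.X P Q n)) :=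
      Finite.of_injective (fun e => (e : FPSep.X P Q n → FPSep.X P Q n))
        (fun e1 e2 h12 => Equiv.coe_fn_injective h12)
    refine ⟨S.comap Φ, ?_, ?_, ?_⟩
    · have hker : Φ.ker ≤ S.comap Φ := by
        intro x hx
        rw [Subgroup.mem_comap]
        rw [MonoidHom.mem_ker] at hx
        rw [hx]
        exact one_mem S
      have h1 : Φ.ker.index ≠ 0 := by
        rw [Subgroup.index_ker]
        haveI : Finite Φ.range := Subtype.finite
        exact Nat.card_pos.ne'
      refine ⟨fun h0 => h1 ?_⟩
      have hdvd := Subgroup.index_dvd_of_le hker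
      rw [h0] at hdvd
      exact zero_dvd_iff.1 hdvd
    · rintro x ⟨a, haH, rfl⟩
      rw [Subgroup.mem_comap]
      exact ⟨a, rfl⟩
    · intro hgK
      rw [Subgroup.mem_comap] at hgK
      obtain ⟨a, ha⟩ := hgK
      have hgood : ∀ x ∈ w.map (Sum.map φ ψ), FPSep.Good x := by
        intro x hx
        obtain ⟨y, hy, rfl⟩ := List.mem_map.1 hx
        rcases y with a' | b'
        · have hne : φ a' ≠ 1 := hφ a' (List.mem_filterMap.2 ⟨_, hy, rfl⟩)
          exact ⟨by simpa using hne, by simp⟩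
        · have hne : ψ b' ≠ 1 := hψ b' (List.mem_filterMap.2 ⟨_, hy, rfl⟩)
          exact ⟨by simp, by simpa using hne⟩
      have hcomp := FPSep.compute φ ψ n w hw.1 hgood hn.ge
      rw [hprod] at hcomp
      have h3 : (Sum.inr (ψ b0) : P ⊕ Q) ∈
          ((Φ g) ⟨[], FPSep.red_nil, by simp⟩).1 := by
        rw [hΦdef, hcomp]
        exact List.mem_map.2 ⟨_, hb0, rfl⟩
      rw [← ha] at h3
      have h4 : (Φ.comp Coprod.inl) a = FPSep.homL n (φ a) := by
        simp [hΦdef, FPSep.bigHom]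
      erw [h4, FPSep.homL_apply] at h3
      rw [FPSep.actL_nil] at h3
      split_ifs at h3 <;> simp_all
  · obtain ⟨K₀, hK₀fi, hK₀le, hK₀g⟩ := hH (Coprod.fst g) hfst
    refine ⟨K₀.comap Coprod.fst, ?_, ?_, ?_⟩
    · exact ⟨by
        rw [K₀.index_comap_of_surjective Coprod.fst_surjective]
        exact hK₀fi.index_ne_zero⟩
    · rintro x ⟨a, haH, rfl⟩
      rw [Subgroup.mem_comap]
      simpa using hK₀le haH
    · intro hc
      rw [Subgroup.mem_comap] at hc
      exact hK₀g hc
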